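/- arXiv:1412.3480 — 3 statements merged into one kernel-verified Lean document; each statement's English description precedes it below -/
import Mathlib

section
/- Let M be a linearly ordered cancellative additive commutative monoid, let a, b, u : M and m : ℕ, and assume 0 ≤ a and 0 < b. Suppose that at least one of the following three alternatives holds: (1) a < b, m = 0, and u = a; (2) b ≤ a, a < b + b, m = 1, and b + u = a; (3) b + b ≤ a and there exist n : ℕ and v : M with n • (b + b) + v = a, 0 ≤ v, v < b + b, and aux(b, m, u, n, v), where aux(b, m, u, n, v) means: either (v < b, m = 2 * n, and u = v) or (b ≤ v, m = 2 * n + 1, and b + u = v). Then m • b + u = a, 0 ≤ u, and u < b (i.e., dividing a by b gives quotient m with remainder u). -/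
/-- Correctness theorem (Theorem 1) for de Bruijn's quotient-remainder algorithm:
the recursive body implies the quotient-remainder relation. -/
theorem deBruijn_correct (M : Type*) [AddCommMonoid M] [LinearOrder M] [IsOrderedCancelAddMonoid M]
    (a b u : M) (m : ℕ) (ha : 0 ≤ a) (hb : 0 < b)
    (h : (a < b ∧ m = 0 ∧ u = a) ∨
         (b ≤ a ∧ a < b + b ∧ m = 1 ∧ b + u = a) ∨
         (b + b ≤ a ∧ ∃ (n : ℕ) (v : M),
            n • (b + b) + v = a ∧ 0 ≤ v ∧ v < b + b ∧
            ((v < b ∧ m = 2 * n ∧ u = v) ∨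
             (b ≤ v ∧ m = 2 * n + 1 ∧ b + u = v)))) :
    m • b + u = a ∧ 0 ≤ u ∧ u < b := by
  rcases h with ⟨hab, hm, hu⟩ | ⟨hba, hab, hm, hu⟩ | ⟨hba, n, v, hnv, hv0, hvb, haux⟩
  · subst hm hu; simpa using ⟨ha, hab⟩
  · subst hm
    refine ⟨by simpa using hu, ?_, ?_⟩
    · have : b + 0 ≤ b + u := by rw [add_zero, hu]; exact hba
      exact le_of_add_le_add_left this
    · have : b + u < b + b := by rw [hu]; exact hab
      exact lt_of_add_lt_add_left this
  · have h2 : (n • (b + b) : M) = (2 * n) • b := by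
      rw [two_mul, add_smul, ← smul_add]
    rcases haux with ⟨hvb', hm, hu⟩ | ⟨hbv, hm, hu⟩
    · subst hm hu
      rw [← h2]; exact ⟨hnv, hv0, hvb'⟩
    · subst hm
      refine ⟨?_, ?_, ?_⟩
      · rw [add_smul, one_smul, add_assoc, hu, ← h2]; exact hnv
      · have : b + 0 ≤ b + u := by rw [add_zero, hu]; exact hbv
        exact le_of_add_le_add_left this
      · have : b + u < b + b := by rw [hu]; exact hvb
        exact lt_of_add_lt_add_left this
end

section
/- Let P be a relational program such that for every q : Q and r : R q the set of atoms S q r is finite. Then the least fixpoint of T_P equals the pointwise union ⨆_{n ∈ ℕ} T_P^n(⊥) of the iterates of T_P starting from the bottom interpretation ⊥ (whose q-component is the empty set): its q-component is the union over n ∈ ℕ of the q-components of T_P^n(⊥). -/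
/-- An interpretation: for each predicate symbol `q` of arity `a q`,
a set of tuples of type `Fin (a q) → D`. -/
abbrev Interp (D Q : Type*) (a : Q → ℕ) : Type _ :=
  (q : Q) → Set (Fin (a q) → D)

/-- An atom over a variable type `V`: a predicate symbol `p` together with the
interpretation-independent evaluation `σ` of its argument terms under an assignment. -/
structure Atom (D Q : Type*) (a : Q → ℕ) (V : Type*) where
  p : Q
  σ : (V → D) → (Fin (a p) → D)

/-- The atom is satisfied by `I` with assignment `α` iff `σ α ∈ I p`. -/
def Atom.SatisfiedBy {D Q : Type*} {a : Q → ℕ} {V : Type*}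
    (A : Atom D Q a V) (I : Interp D Q a) (α : V → D) : Prop :=
  A.σ α ∈ I A.p

/-- A relational program: for each predicate symbol `q`, an index type `R q` of
disjuncts, and for each disjunct a type of existential variables and a set of atoms. -/
structure Program (D Q : Type*) (a : Q → ℕ) where
  R : Q → Type*
  E : (q : Q) → R q → Type*
  S : (q : Q) → (r : R q) → Set (Atom D Q a (Fin (a q) ⊕ E q r))

/-- The body of `q` is satisfied by `I` with `t` iff some disjunct has all its
atoms satisfied for some valuation `β` of the existential variables. -/
def Program.BodySat {D Q : Type*} {a : Q → ℕ} (P : Program D Q a)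
    (I : Interp D Q a) (q : Q) (t : Fin (a q) → D) : Prop :=
  ∃ (r : P.R q) (β : P.E q r → D), ∀ A ∈ P.S q r, A.SatisfiedBy I (Sum.elim t β)

/-- `I` is a model of `P` iff for all `q` and `t`, satisfaction of the body
of `q` with `t` implies `t ∈ I q`. -/
def Program.IsModel {D Q : Type*} {a : Q → ℕ} (P : Program D Q a)
    (I : Interp D Q a) : Prop :=
  ∀ q t, P.BodySat I q t → t ∈ I q

/-- The operator `T_P`. -/
def Program.T {D Q : Type*} {a : Q → ℕ} (P : Program D Q a)
    (I : Interp D Q a) : Interp D Q a :=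
  fun q => { t | P.BodySat I q t }

/-- Lemma 3: for a relational program with finite conjunctions, the least
fixpoint of `T_P` equals the pointwise union of the iterates of `T_P`
starting from the bottom interpretation. -/
theorem lfp_eq_iSup_iterates {D Q : Type*} {a : Q → ℕ} (P : Program D Q a)
    (hfin : ∀ (q : Q) (r : P.R q), (P.S q r).Finite)
    (I₀ : Interp D Q a) (hfix : P.T I₀ = I₀)
    (hleast : ∀ I : Interp D Q a, P.T I = I → ∀ q, I₀ q ⊆ I q) :
    I₀ = fun q => ⋃ n : ℕ, (P.T^[n] (fun _ => ∅)) q := by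
  classical
  have mono : ∀ I J : Interp D Q a, (∀ q, I q ⊆ J q) → ∀ q, P.T I q ⊆ P.T J q := by
    intro I J h q t ht
    obtain ⟨r, β, hA⟩ := ht
    exact ⟨r, β, fun A hA' => h A.p (hA A hA')⟩
  have chain : ∀ n q, (P.T^[n] (fun _ => ∅)) q ⊆ (P.T^[n+1] (fun _ => ∅)) q := by
    intro n
    induction n with
    | zero => intro q t ht; exact absurd ht (Set.notMem_empty t)
    | succ n ih =>
      intro q
      rw [Function.iterate_succ_apply', Function.iterate_succ_apply']
      exact mono _ _ ih q
  have chain_le : ∀ m n, m ≤ n → ∀ q,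
      (P.T^[m] (fun _ => ∅)) q ⊆ (P.T^[n] (fun _ => ∅)) q := by
    intro m n hmn
    induction hmn with
    | refl => exact fun q => subset_rfl
    | step _ ih => exact fun q => (ih q).trans (chain _ q)
  set J : Interp D Q a := fun q => ⋃ n : ℕ, (P.T^[n] (fun _ => ∅)) q with hJ
  have hTJ : P.T J = J := by
    funext q
    apply Set.Subset.antisymm
    · intro t ht
      obtain ⟨r, β, hA⟩ := ht
      have hstage : ∀ A ∈ P.S q r, ∃ n, A.σ (Sum.elim t β) ∈ (P.T^[n] (fun _ => ∅)) A.p := by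
        intro A hA'
        have := hA A hA'
        simpa [Atom.SatisfiedBy, hJ, Set.mem_iUnion] using this
      choose! n hn using hstage
      set N := (hfin q r).toFinset.sup n with hN
      have hle : ∀ A ∈ P.S q r, n A ≤ N := by
        intro A hA'
        exact Finset.le_sup ((hfin q r).mem_toFinset.mpr hA')
      have ht' : t ∈ P.T (P.T^[N] (fun _ => ∅)) q :=
        ⟨r, β, fun A hA' => chain_le (n A) N (hle A hA') A.p (hn A hA')⟩
      have : t ∈ (P.T^[N+1] (fun _ => ∅)) q := by
        rwa [Function.iterate_succ_apply']
      exact Set.mem_iUnion.mpr ⟨N + 1, this⟩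
    · intro t ht
      obtain ⟨m, hm⟩ := Set.mem_iUnion.mp ht
      cases m with
      | zero => exact absurd hm (Set.notMem_empty t)
      | succ m =>
        rw [Function.iterate_succ_apply'] at hm
        exact mono _ _ (fun q' => Set.subset_iUnion (fun k => (P.T^[k] (fun _ => ∅)) q') m) q hm
  have iter_le : ∀ m q, (P.T^[m] (fun _ => ∅)) q ⊆ I₀ q := by
    intro m
    induction m with
    | zero => exact fun q => Set.empty_subset _
    | succ m ih =>
      intro q
      rw [Function.iterate_succ_apply']
      intro t ht
      have := mono _ _ ih q ht
      rwa [hfix] at this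
  funext q
  exact Set.Subset.antisymm (hleast J hTJ q) (Set.iUnion_subset fun m => iter_le m q)
end

section
/- Let P be a relational program such that for every q : Q and r : R q the set of atoms S q r is finite. Then the least model of P (with respect to ≼) exists and equals the pointwise union ⨆_{n ∈ ℕ} T_P^n(⊥) of the iterates of T_P starting from the bottom interpretation ⊥ (whose q-component is the empty set). -/
/-- Theorem 6: for a relational program with finite conjunctions, the least model
exists and equals the pointwise union of the iterates of `T_P` from bottom. -/
theorem least_model_eq_iSup_iterates {D Q : Type*} {a : Q → ℕ} (P : Program D Q a)
    (hfin : ∀ (q : Q) (r : P.R q), (P.S q r).Finite) :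
    P.IsModel (fun q => ⋃ n : ℕ, (P.T^[n] (fun _ => ∅)) q) ∧
      ∀ I : Interp D Q a, P.IsModel I →
        ∀ q, (⋃ n : ℕ, (P.T^[n] (fun _ => ∅)) q) ⊆ I q := by
  classical
  have Tmono : ∀ I J : Interp D Q a, (∀ q, I q ⊆ J q) → ∀ q, P.T I q ⊆ P.T J q := by
    intro I J h q t ht
    obtain ⟨r, β, hβ⟩ := ht
    exact ⟨r, β, fun A hA => h A.p (hβ A hA)⟩
  have step : ∀ n q, (P.T^[n] (fun _ => ∅)) q ⊆ (P.T^[n+1] (fun _ => ∅)) q := by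
    intro n
    induction n with
    | zero => intro q t ht; exact absurd ht (Set.notMem_empty t)
    | succ n ih =>
        intro q
        rw [Function.iterate_succ_apply', Function.iterate_succ_apply']
        exact Tmono _ _ ih q
  have chain : ∀ {n m}, n ≤ m → ∀ q, (P.T^[n] (fun _ => ∅)) q ⊆ (P.T^[m] (fun _ => ∅)) q := by
    intro n m h
    induction h with
    | refl => intro q; exact subset_rfl
    | step _ ih => exact fun q => (ih q).trans (step _ q)
  constructor
  · intro q t ht
    obtain ⟨r, β, hβ⟩ := ht
    have key : ∀ (S' : Set (Atom D Q a (Fin (a q) ⊕ P.E q r))), S'.Finite →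
        S' ⊆ P.S q r → ∃ N, ∀ A ∈ S',
          A.SatisfiedBy (P.T^[N] (fun _ => ∅)) (Sum.elim t β) := by
      intro S' hS'
      refine Set.Finite.induction_on (motive := fun S' _ => S' ⊆ P.S q r → ∃ N, ∀ A ∈ S',
          A.SatisfiedBy (P.T^[N] (fun _ => ∅)) (Sum.elim t β)) S' hS' ?_ ?_
      · intro _; exact ⟨0, fun A hA => absurd hA (Set.notMem_empty A)⟩
      · intro A s hA hs ih hsub
        obtain ⟨N, hN⟩ := ih (fun x hx => hsub (Set.mem_insert_of_mem _ hx))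
        have hAmem : A.SatisfiedBy (fun p => ⋃ n : ℕ, (P.T^[n] (fun _ => ∅)) p)
            (Sum.elim t β) := hβ A (hsub (Set.mem_insert _ _))
        obtain ⟨_, ⟨n, rfl⟩, hn⟩ := hAmem
        refine ⟨max n N, fun B hB => ?_⟩
        rcases Set.mem_insert_iff.mp hB with rfl | hB
        · exact chain (le_max_left n N) _ hn
        · exact chain (le_max_right n N) _ (hN B hB)
    obtain ⟨N, hN⟩ := key _ (hfin q r) subset_rfl
    exact Set.mem_iUnion.mpr ⟨N + 1, by
      rw [Function.iterate_succ_apply']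
      exact ⟨r, β, hN⟩⟩
  · intro I hI q
    refine Set.iUnion_subset fun n => ?_
    induction n generalizing q with
    | zero => exact fun t ht => absurd ht (Set.notMem_empty t)
    | succ n ih =>
        intro t ht
        rw [Function.iterate_succ_apply'] at ht
        obtain ⟨r, β, hβ⟩ := ht
        exact hI q t ⟨r, β, fun A hA => ih A.p (hβ A hA)⟩
end
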